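/- Sub- and super-solutions principle: Let f : V × ℝ → ℝ be continuous and F : V × ℝ → ℝ satisfy ∂F/∂t(x,t) = f(x,t) for all (x,t), and define J(u) = ∫_V (½|∇u|² − F(x, u(x))) dμ. Suppose φ is a sub-solution (Δφ(x) + f(x, φ(x)) ≥ 0 for all x ∈ V) and ψ is a super-solution (Δψ(x) + f(x, ψ(x)) ≤ 0 for all x ∈ V) with φ(x) ≤ ψ(x) for all x ∈ V. Then every minimizer u of J over the set {v : V → ℝ : φ(x) ≤ v(x) ≤ ψ(x) for all x} satisfies −Δu(x) = f(x, u(x)) for all x ∈ V. -/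

import Mathlib

open Finset Real

/-- The graph Laplacian: `Δu(x) = (1/μ x) * Σ_y ω x y * (u y - u x)`. -/
noncomputable def graphLap {V : Type*} [Fintype V] (ω : V → V → ℝ) (μ : V → ℝ)
    (u : V → ℝ) (x : V) : ℝ :=
  (1 / μ x) * ∑ y, ω x y * (u y - u x)

/-- The integral of `f` over `V` with respect to the vertex measure `μ`. -/
noncomputable def graphInt {V : Type*} [Fintype V] (μ : V → ℝ) (f : V → ℝ) : ℝ :=
  ∑ x, f x * μ x

/-- Connectivity: any two distinct vertices are joined by a chain of positively
weighted edges. -/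
def graphConn {V : Type*} (ω : V → V → ℝ) : Prop :=
  ∀ x y : V, x ≠ y → ∃ (m : ℕ) (p : ℕ → V), p 0 = x ∧ p m = y ∧
    ∀ i < m, 0 < ω (p i) (p (i + 1))

/-- The gradient form `Γ(u,v)(x)`. -/
noncomputable def graphGamma {V : Type*} [Fintype V] (ω : V → V → ℝ) (μ : V → ℝ)
    (u v : V → ℝ) (x : V) : ℝ :=
  (1 / (2 * μ x)) * ∑ y, ω x y * (u y - u x) * (v y - v x)

/-- The length of the gradient: `|∇u|(x) = √(Γ(u,u)(x))`. -/
noncomputable def graphGradNorm {V : Type*} [Fintype V] (ω : V → V → ℝ) (μ : V → ℝ)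
    (u : V → ℝ) (x : V) : ℝ :=
  Real.sqrt (graphGamma ω μ u u x)

/-- The functional `J_{h,f}(u) = ∫_V (½|∇u|² + f·u − h·e^u) dμ`. -/
noncomputable def Jfunc {V : Type*} [Fintype V] (ω : V → V → ℝ) (μ : V → ℝ)
    (h f : V → ℝ) (u : V → ℝ) : ℝ :=
  graphInt μ (fun x => (1 / 2) * (graphGradNorm ω μ u x) ^ 2 + f x * u x - h x * Real.exp (u x))


section subSuperHelpers

variable {V : Type*} [Fintype V]

lemma gamma_nonneg' (ω : V → V → ℝ) (μ : V → ℝ) (hnonneg : ∀ x y, 0 ≤ ω x y)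
    (hμ : ∀ x, 0 < μ x) (v : V → ℝ) (x : V) : 0 ≤ graphGamma ω μ v v x := by
  unfold graphGamma
  apply mul_nonneg
  · have := hμ x; positivity
  · apply Finset.sum_nonneg
    intro y _
    have := hnonneg x y
    nlinarith [sq_nonneg (v y - v x)]

lemma Jformula' (ω : V → V → ℝ) (μ : V → ℝ) (hnonneg : ∀ x y, 0 ≤ ω x y)
    (hμ : ∀ x, 0 < μ x) (F : V → ℝ → ℝ) (J : (V → ℝ) → ℝ)
    (hJ : ∀ v, J v =
      graphInt μ (fun x => (1 / 2) * (graphGradNorm ω μ v x) ^ 2 - F x (v x)))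
    (v : V → ℝ) :
    J v = (1/4) * ∑ x, ∑ y, ω x y * (v y - v x)^2 - ∑ x, F x (v x) * μ x := by
  rw [hJ]
  unfold graphInt
  have h1 : ∀ x : V, ((1/2) * (graphGradNorm ω μ v x) ^ 2 - F x (v x)) * μ x
      = (1/4) * ∑ y, ω x y * (v y - v x)^2 - F x (v x) * μ x := by
    intro x
    unfold graphGradNorm
    rw [Real.sq_sqrt (gamma_nonneg' ω μ hnonneg hμ v x)]
    unfold graphGamma
    have hs : ∑ y, ω x y * (v y - v x) * (v y - v x) = ∑ y, ω x y * (v y - v x)^2 := by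
      apply Finset.sum_congr rfl; intro y _; ring
    rw [hs]
    have hx := (hμ x).ne'
    field_simp
    ring
  calc ∑ x, ((1/2) * (graphGradNorm ω μ v x) ^ 2 - F x (v x)) * μ x
      = ∑ x, ((1/4) * ∑ y, ω x y * (v y - v x)^2 - F x (v x) * μ x) :=
        Finset.sum_congr rfl (fun x _ => h1 x)
    _ = (1/4) * ∑ x, ∑ y, ω x y * (v y - v x)^2 - ∑ x, F x (v x) * μ x := by
        rw [Finset.sum_sub_distrib, Finset.mul_sum]

lemma lap_mono_touch' (ω : V → V → ℝ) (μ : V → ℝ) (hnonneg : ∀ x y, 0 ≤ ω x y)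
    (hμ : ∀ x, 0 < μ x) (u ψ : V → ℝ) (hle : ∀ y, u y ≤ ψ y) (x₀ : V)
    (heq : u x₀ = ψ x₀) : graphLap ω μ u x₀ ≤ graphLap ω μ ψ x₀ := by
  unfold graphLap
  apply mul_le_mul_of_nonneg_left _ (one_div_nonneg.mpr (hμ x₀).le)
  apply Finset.sum_le_sum
  intro y _
  apply mul_le_mul_of_nonneg_left _ (hnonneg x₀ y)
  have := hle y
  linarith

lemma deriv_nonneg_of_right_min' {g : ℝ → ℝ} {c b : ℝ} (hb : 0 < b) (hd : HasDerivAt g c 0)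
    (hmin : ∀ t, 0 < t → t ≤ b → g 0 ≤ g t) : 0 ≤ c := by
  have h := hasDerivAt_iff_tendsto_slope.mp hd
  have h2 : Filter.Tendsto (slope g 0) (nhdsWithin 0 (Set.Ioi 0)) (nhds c) :=
    h.mono_left (nhdsWithin_mono 0 (fun t ht => ne_of_gt ht))
  refine ge_of_tendsto h2 ?_
  filter_upwards [Ioc_mem_nhdsGT_of_mem (Set.left_mem_Ico.mpr hb)] with t ht
  rw [slope_def_field]
  have h0 := hmin t ht.1 ht.2
  have : (0:ℝ) < t - 0 := by simpa using ht.1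
  apply div_nonneg (by linarith) (by linarith)

lemma deriv_nonpos_of_left_min' {g : ℝ → ℝ} {c a : ℝ} (ha : a < 0) (hd : HasDerivAt g c 0)
    (hmin : ∀ t, a ≤ t → t < 0 → g 0 ≤ g t) : c ≤ 0 := by
  have h := hasDerivAt_iff_tendsto_slope.mp hd
  have h2 : Filter.Tendsto (slope g 0) (nhdsWithin 0 (Set.Iio 0)) (nhds c) :=
    h.mono_left (nhdsWithin_mono 0 (fun t ht => ne_of_lt ht))
  refine le_of_tendsto h2 ?_
  filter_upwards [Ico_mem_nhdsLT_of_mem (Set.right_mem_Ioc.mpr ha)] with t ht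
  rw [slope_def_field]
  have h0 := hmin t ht.1 ht.2
  have : t - 0 < 0 := by simpa using ht.2
  exact div_nonpos_of_nonneg_of_nonpos (by linarith) (by linarith)

variable [DecidableEq V]

lemma key_deriv' (ω : V → V → ℝ) (μ : V → ℝ)
    (hsymm : ∀ x y, ω x y = ω y x) (hμ : ∀ x, 0 < μ x)
    (f F : V → ℝ → ℝ) (hF : ∀ x t, HasDerivAt (F x) (f x t) t)
    (J : (V → ℝ) → ℝ)
    (hJf : ∀ v : V → ℝ, J v = (1/4) * ∑ x, ∑ y, ω x y * (v y - v x)^2 - ∑ x, F x (v x) * μ x)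
    (u : V → ℝ) (x₀ : V) :
    HasDerivAt (fun t : ℝ => J (fun z => u z + t * (if z = x₀ then (1:ℝ) else 0)))
      ((-(graphLap ω μ u x₀) - f x₀ (u x₀)) * μ x₀) 0 := by
  set e : V → ℝ := fun z => if z = x₀ then (1:ℝ) else 0 with he
  have hrw : (fun t : ℝ => J (fun z => u z + t * e z))
      = fun t : ℝ => (1/4) * ∑ x, ∑ y, ω x y * ((u y + t * e y) - (u x + t * e x))^2
        - ∑ x, F x (u x + t * e x) * μ x := by
    funext t; rw [hJf]
  rw [hrw]
  have hQ : HasDerivAt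
      (fun t : ℝ => (1/4) * ∑ x, ∑ y, ω x y * ((u y + t * e y) - (u x + t * e x))^2)
      ((1/4) * ∑ x, ∑ y, ω x y * (2 * (u y - u x) * (e y - e x))) 0 := by
    apply HasDerivAt.const_mul
    apply HasDerivAt.fun_sum
    intro x _
    apply HasDerivAt.fun_sum
    intro y _
    have hlin : HasDerivAt (fun t : ℝ => (u y + t * e y) - (u x + t * e x)) (e y - e x) 0 := by
      simpa using ((((hasDerivAt_id (0:ℝ)).mul_const (e y)).const_add (u y)).fun_sub
        (((hasDerivAt_id (0:ℝ)).mul_const (e x)).const_add (u x)))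
    have h2 := (hlin.pow 2).const_mul (ω x y)
    refine h2.congr_deriv ?_
    simp
  have hP : HasDerivAt (fun t : ℝ => ∑ x, F x (u x + t * e x) * μ x)
      (∑ x, f x (u x) * e x * μ x) 0 := by
    apply HasDerivAt.fun_sum
    intro x _
    have hlin : HasDerivAt (fun t : ℝ => u x + t * e x) (e x) 0 := by
      simpa using ((hasDerivAt_id (0:ℝ)).mul_const (e x)).const_add (u x)
    have hcomp := (hF x (u x + 0 * e x)).comp 0 hlin
    have hcomp2 : HasDerivAt (fun t : ℝ => F x (u x + t * e x)) (f x (u x) * e x) 0 := by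
      simp only [zero_mul, add_zero] at hcomp; exact hcomp
    exact hcomp2.mul_const (μ x)
  have hd := hQ.fun_sub hP
  refine hd.congr_deriv ?_
  have hdP : ∑ x, f x (u x) * e x * μ x = f x₀ (u x₀) * μ x₀ := by
    rw [Finset.sum_eq_single x₀]
    · simp [he]
    · intro b _ hb; simp [he, hb]
    · intro h; exact absurd (Finset.mem_univ x₀) h
  have step : ∀ x : V, ∑ y, ω x y * (2 * (u y - u x) * (e y - e x))
      = 2 * (ω x x₀ * (u x₀ - u x)) - (if x = x₀ then ∑ y, 2 * (ω x y * (u y - u x)) else 0) := by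
    intro x
    have hpt : ∀ y : V, ω x y * (2 * (u y - u x) * (e y - e x))
        = (if y = x₀ then 2 * (ω x y * (u y - u x)) else 0)
          - (if x = x₀ then 2 * (ω x y * (u y - u x)) else 0) := by
      intro y
      simp only [he]
      split_ifs <;> ring
    have h2 : ∑ y, (if x = x₀ then 2 * (ω x y * (u y - u x)) else 0)
        = (if x = x₀ then ∑ y, 2 * (ω x y * (u y - u x)) else 0) := by
      split_ifs <;> simp
    rw [Finset.sum_congr rfl (fun y _ => hpt y), Finset.sum_sub_distrib, h2,
      Finset.sum_ite_eq' Finset.univ x₀]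
    simp only [Finset.mem_univ, if_true]
  have hdQ : ∑ x, ∑ y, ω x y * (2 * (u y - u x) * (e y - e x))
      = -4 * ∑ y, ω x₀ y * (u y - u x₀) := by
    rw [Finset.sum_congr rfl (fun x _ => step x), Finset.sum_sub_distrib,
      Finset.sum_ite_eq' Finset.univ x₀]
    simp only [Finset.mem_univ, if_true]
    have h1 : ∑ x, 2 * (ω x x₀ * (u x₀ - u x)) = -(2 * ∑ x, ω x₀ x * (u x - u x₀)) := by
      rw [Finset.mul_sum, ← Finset.sum_neg_distrib]
      apply Finset.sum_congr rfl
      intro x _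
      rw [hsymm x x₀]; ring
    rw [h1, ← Finset.mul_sum]
    ring
  rw [hdQ, hdP]
  unfold graphLap
  have hx := (hμ x₀).ne'
  field_simp

end subSuperHelpers

/-- Sub- and super-solutions principle: if `φ` is a sub-solution and `ψ` a
super-solution of `−Δu = f(x,u)` with `φ ≤ ψ`, then every minimizer of
`J(u) = ∫_V (½|∇u|² − F(x,u)) dμ` over `{v : φ ≤ v ≤ ψ}` solves the equation. -/
theorem sub_super_solutions_principle {V : Type*} [Fintype V] [Nonempty V]
    (ω : V → V → ℝ) (μ : V → ℝ)
    (hsymm : ∀ x y, ω x y = ω y x)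
    (hnonneg : ∀ x y, 0 ≤ ω x y)
    (hconn : graphConn ω)
    (hμ : ∀ x, 0 < μ x)
    (f F : V → ℝ → ℝ)
    (hf_cont : ∀ x, Continuous (f x))
    (hF : ∀ x t, HasDerivAt (F x) (f x t) t)
    (J : (V → ℝ) → ℝ)
    (hJ : ∀ v, J v =
      graphInt μ (fun x => (1 / 2) * (graphGradNorm ω μ v x) ^ 2 - F x (v x)))
    (φ ψ : V → ℝ)
    (hsub : ∀ x, 0 ≤ graphLap ω μ φ x + f x (φ x))
    (hsuper : ∀ x, graphLap ω μ ψ x + f x (ψ x) ≤ 0)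
    (hle : ∀ x, φ x ≤ ψ x)
    (u : V → ℝ)
    (hu_mem : ∀ x, φ x ≤ u x ∧ u x ≤ ψ x)
    (hu_min : ∀ v : V → ℝ, (∀ x, φ x ≤ v x ∧ v x ≤ ψ x) → J u ≤ J v) :
    ∀ x, -graphLap ω μ u x = f x (u x) := by
  
  letI := Classical.decEq V
  intro x₀
  have hJf := Jformula' ω μ hnonneg hμ F J hJ
  set e : V → ℝ := fun z => if z = x₀ then (1:ℝ) else 0 with he
  have hd := key_deriv' ω μ hsymm hμ f F hF J hJf u x₀
  have hg0 : (fun z => u z + (0:ℝ) * e z) = u := by funext z; ring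
  have hge : 0 ≤ -(graphLap ω μ u x₀) - f x₀ (u x₀) := by
    rcases eq_or_lt_of_le (hu_mem x₀).2 with heq | hlt
    · have h1 := lap_mono_touch' ω μ hnonneg hμ u ψ (fun y => (hu_mem y).2) x₀ heq
      have h2 := hsuper x₀
      rw [heq]
      linarith
    · have hmin : ∀ t, 0 < t → t ≤ ψ x₀ - u x₀ →
          J (fun z => u z + (0:ℝ) * e z) ≤ J (fun z => u z + t * e z) := by
        intro t ht1 ht2
        rw [hg0]
        apply hu_min
        intro x
        by_cases hx : x = x₀
        · subst hx
          simp only [he, if_pos rfl, mul_one]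
          exact ⟨by linarith [(hu_mem x).1], by linarith⟩
        · simp only [he, if_neg hx, mul_zero, add_zero]
          exact hu_mem x
      have hc := deriv_nonneg_of_right_min' (by linarith : (0:ℝ) < ψ x₀ - u x₀) hd hmin
      nlinarith [hμ x₀]
  have hle' : -(graphLap ω μ u x₀) - f x₀ (u x₀) ≤ 0 := by
    rcases eq_or_lt_of_le (hu_mem x₀).1 with heq | hlt
    · have h1 := lap_mono_touch' ω μ hnonneg hμ φ u (fun y => (hu_mem y).1) x₀ heq
      have h2 := hsub x₀
      rw [← heq]
      linarith
    · have hmin : ∀ t, φ x₀ - u x₀ ≤ t → t < 0 →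
          J (fun z => u z + (0:ℝ) * e z) ≤ J (fun z => u z + t * e z) := by
        intro t ht1 ht2
        rw [hg0]
        apply hu_min
        intro x
        by_cases hx : x = x₀
        · subst hx
          simp only [he, if_pos rfl, mul_one]
          exact ⟨by linarith, by linarith [(hu_mem x).2]⟩
        · simp only [he, if_neg hx, mul_zero, add_zero]
          exact hu_mem x
      have hc := deriv_nonpos_of_left_min' (by linarith : φ x₀ - u x₀ < 0) hd hmin
      nlinarith [hμ x₀]
  linarith
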